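/- Let n ≥ 2 and let U be an n×n unitary complex matrix. Then P⁻¹UP = U holds for every n×n permutation matrix P if and only if U = aI + bJ for some complex numbers a, b satisfying |a| = 1 and |a + n·b| = 1. -/

import Mathlib

open Matrix

lemma permMatrix_mul_symm {n : ℕ} (σ : Equiv.Perm (Fin n)) :
    σ.permMatrix ℂ * Equiv.Perm.permMatrix ℂ σ.symm = 1 := by
  show σ.toPEquiv.toMatrix * σ.symm.toPEquiv.toMatrix = 1
  rw [← PEquiv.toMatrix_trans, ← Equiv.toPEquiv_trans, Equiv.self_trans_symm,
    Equiv.toPEquiv_refl, PEquiv.toMatrix_refl]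

lemma conj_iff {n : ℕ} (σ : Equiv.Perm (Fin n)) (U : Matrix (Fin n) (Fin n) ℂ) :
    (σ.permMatrix ℂ)⁻¹ * U * σ.permMatrix ℂ = U ↔ ∀ i j, U (σ i) (σ j) = U i j := by
  have hinv : (σ.permMatrix ℂ)⁻¹ = Equiv.Perm.permMatrix ℂ σ.symm :=
    Matrix.inv_eq_right_inv (permMatrix_mul_symm σ)
  rw [hinv]
  constructor
  · intro h i j
    have := congrArg (fun M : Matrix (Fin n) (Fin n) ℂ => M (σ i) (σ j)) h
    beta_reduce at this
    rw [← this]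
    rw [Matrix.mul_assoc, PEquiv.mul_toMatrix_toPEquiv, PEquiv.toMatrix_toPEquiv_mul]
    simp
  · intro h
    rw [Matrix.mul_assoc, PEquiv.mul_toMatrix_toPEquiv, PEquiv.toMatrix_toPEquiv_mul]
    ext i j
    simp only [submatrix_apply, id_eq]
    have := h (σ.symm i) (σ.symm j)
    simpa using this.symm

lemma abs_one_of {z : ℂ} (h : z * starRingEnd ℂ z = 1) : ‖z‖ = 1 := by
  have hns : Complex.normSq z = 1 := by
    have := Complex.mul_conj z
    rw [h] at this
    exact_mod_cast this.symm
  rw [Complex.norm_def, hns, Real.sqrt_one]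

theorem stmt_2 (n : ℕ) (hn : 2 ≤ n) (U : Matrix (Fin n) (Fin n) ℂ)
    (hU : U ∈ Matrix.unitaryGroup (Fin n) ℂ) :
    (∀ σ : Equiv.Perm (Fin n),
      (σ.permMatrix ℂ)⁻¹ * U * σ.permMatrix ℂ = U) ↔
    ∃ a b : ℂ, U = a • (1 : Matrix (Fin n) (Fin n) ℂ)
        + b • (Matrix.of fun _ _ => (1 : ℂ))
      ∧ ‖a‖ = 1 ∧ ‖a + n * b‖ = 1 := by
  set J : Matrix (Fin n) (Fin n) ℂ := Matrix.of fun _ _ => (1 : ℂ) with hJdef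
  have hJJ : J * J = (n : ℂ) • J := by
    ext i j
    simp [hJdef, Matrix.mul_apply]
  have hstarJ : star J = J := by
    ext i j
    simp [hJdef, Matrix.conjTranspose_apply]
  have h01 : (⟨0, by omega⟩ : Fin n) ≠ ⟨1, by omega⟩ := by simp [Fin.ext_iff]
  constructor
  · intro h
    have hperm : ∀ (σ : Equiv.Perm (Fin n)) i j, U (σ i) (σ j) = U i j :=
      fun σ => (conj_iff σ U).mp (h σ)
    set i0 : Fin n := ⟨0, by omega⟩ with hi0
    set i1 : Fin n := ⟨1, by omega⟩ with hi1
    set b := U i0 i1 with hb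
    set a := U i0 i0 - b with ha
    have hdiag : ∀ i, U i i = U i0 i0 := by
      intro i
      have := hperm (Equiv.swap i0 i) i0 i0
      simpa [Equiv.swap_apply_left] using this
    have hoff : ∀ i j, i ≠ j → U i j = b := by
      intro i j hij
      set τ := Equiv.swap i0 i with hτ
      have hji : τ.symm j ≠ i0 := by
        rw [Ne, Equiv.symm_apply_eq, hτ, Equiv.swap_apply_left]
        exact hij.symm
      set σ := (Equiv.swap i1 (τ.symm j)).trans τ with hσ
      have hσ0 : σ i0 = i := by
        rw [hσ, Equiv.trans_apply, Equiv.swap_apply_of_ne_of_ne h01 (Ne.symm hji),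
          hτ, Equiv.swap_apply_left]
      have hσ1 : σ i1 = j := by
        rw [hσ, Equiv.trans_apply, Equiv.swap_apply_left, Equiv.apply_symm_apply]
      have := hperm σ i0 i1
      rw [hσ0, hσ1] at this
      exact this
    have hform : U = a • 1 + b • J := by
      ext i j
      by_cases hij : i = j
      · subst hij
        simp only [Matrix.add_apply, Matrix.smul_apply, Matrix.one_apply_eq, hJdef,
          Matrix.of_apply, smul_eq_mul, mul_one]
        rw [hdiag i, ha]
        ring
      · simp [Matrix.add_apply, Matrix.smul_apply, Matrix.one_apply_ne hij, hJdef,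
          hoff i j hij]
    refine ⟨a, b, hform, ?_, ?_⟩
    all_goals {
      have hUU : U * star U = 1 := (Matrix.mem_unitaryGroup_iff).mp hU
      rw [hform] at hUU
      have hexp : (a • (1 : Matrix (Fin n) (Fin n) ℂ) + b • J) * star (a • 1 + b • J)
          = (a * starRingEnd ℂ a) • (1 : Matrix (Fin n) (Fin n) ℂ)
            + (a * starRingEnd ℂ b + b * starRingEnd ℂ a
                + (n : ℂ) * (b * starRingEnd ℂ b)) • J := by
        rw [star_add, star_smul, star_smul, star_one, hstarJ]
        simp only [Complex.star_def, add_mul, mul_add, Matrix.smul_mul, Matrix.mul_smul,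
          smul_smul, hJJ, Matrix.mul_one, Matrix.one_mul]
        module
      rw [hexp] at hUU
      have e2 : a * starRingEnd ℂ b + b * starRingEnd ℂ a
          + (n : ℂ) * (b * starRingEnd ℂ b) = 0 := by
        have := congrFun (congrFun hUU ⟨0, by omega⟩) ⟨1, by omega⟩
        simpa [Matrix.add_apply, Matrix.smul_apply, Matrix.one_apply_ne h01, hJdef] using this
      have e1 : a * starRingEnd ℂ a = 1 := by
        have := congrFun (congrFun hUU ⟨0, by omega⟩) ⟨0, by omega⟩
        simp only [Matrix.add_apply, Matrix.smul_apply, Matrix.one_apply_eq, hJdef,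
          Matrix.of_apply, smul_eq_mul, mul_one, e2, zero_mul, add_zero] at this
        exact this
      first
      | exact abs_one_of e1
      | exact abs_one_of (by
          rw [map_add, _root_.map_mul, Complex.conj_natCast]
          linear_combination e1 + (n : ℂ) * e2)
    }
  · rintro ⟨a, b, hform, -, -⟩ σ
    rw [conj_iff]
    intro i j
    rw [hform]
    by_cases hij : i = j
    · subst hij; simp [hJdef]
    · have hσij : σ i ≠ σ j := fun hc => hij (σ.injective hc)
      simp [Matrix.add_apply, Matrix.smul_apply, Matrix.one_apply_ne hij,
        Matrix.one_apply_ne hσij, hJdef]
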